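/- Let ℓ be a prime, c an integer, and s ∈ ℂ with σ = Re s > -1. For u ≥ c, the integral ∫_{ℓ^u ℤ_ℓ^×} |y|'^s ψ(-yη) dy over the set of y ∈ ℚ_ℓ of valuation exactly u, where |y|' = ℓ^{-2⌊v_ℓ(y)/2⌋} (for ℓ odd) and ψ is the standard additive character of ℚ_ℓ, vanishes whenever |η|_ℓ > ℓ^{u+2}, and in general is bounded in absolute value by C ℓ^{-u(σ+1)} with C depending only on σ. Consequently ∫_{ℓ^c ℤ_ℓ} |y|'^s ψ(-yη) dy ≪_{σ,c} (1 + |η|_ℓ)^{-σ-1}. -/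

import Mathlib

open MeasureTheory Metric Set

section AuxPadic

variable {ℓ : ℕ} [hℓ : Fact ℓ.Prime]

private lemma pax_hq1 : 1 < (ℓ:ℝ) := by exact_mod_cast hℓ.out.one_lt

private lemma pax_ball_eq (u : ℤ) :
    {y : ℚ_[ℓ] | ‖y‖ ≤ (ℓ:ℝ)^(-u)} = Metric.closedBall (0:ℚ_[ℓ]) ((ℓ:ℝ)^(-u)) := by
  ext y; simp [Metric.mem_closedBall, dist_eq_norm]

private lemma pax_ball_compact (u : ℤ) : IsCompact {y : ℚ_[ℓ] | ‖y‖ ≤ (ℓ:ℝ)^(-u)} := by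
  rw [pax_ball_eq]; exact isCompact_closedBall _ _

private lemma pax_ball_meas [MeasurableSpace ℚ_[ℓ]] [BorelSpace ℚ_[ℓ]] (u : ℤ) :
    MeasurableSet {y : ℚ_[ℓ] | ‖y‖ ≤ (ℓ:ℝ)^(-u)} := by
  rw [pax_ball_eq]; exact measurableSet_closedBall

private lemma pax_shell_meas [MeasurableSpace ℚ_[ℓ]] [BorelSpace ℚ_[ℓ]] (u : ℤ) :
    MeasurableSet {y : ℚ_[ℓ] | ‖y‖ = (ℓ:ℝ)^(-u)} := by
  have : {y : ℚ_[ℓ] | ‖y‖ = (ℓ:ℝ)^(-u)} = (fun y : ℚ_[ℓ] => ‖y‖) ⁻¹' {(ℓ:ℝ)^(-u)} := rfl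
  rw [this]; exact (continuous_norm.measurable) (measurableSet_singleton _)

private lemma pax_norm_lt (y : ℚ_[ℓ]) (u : ℤ) :
    ‖y‖ ≤ (ℓ:ℝ)^(-(u+1)) ↔ ‖y‖ < (ℓ:ℝ)^(-u) := by
  have := Padic.norm_le_pow_iff_norm_lt_pow_add_one y (-(u+1))
  rwa [show -(u+1)+1 = -u by ring] at this

private lemma pax_shell_eq (u : ℤ) :
    {y : ℚ_[ℓ] | ‖y‖ = (ℓ:ℝ)^(-u)} =
      {y : ℚ_[ℓ] | ‖y‖ ≤ (ℓ:ℝ)^(-u)} \ {y : ℚ_[ℓ] | ‖y‖ ≤ (ℓ:ℝ)^(-(u+1))} := by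
  ext y
  simp only [Set.mem_setOf_eq, Set.mem_diff, pax_norm_lt, not_lt]
  constructor
  · intro h; exact ⟨le_of_eq h, le_of_eq h.symm⟩
  · intro ⟨h1, h2⟩; exact le_antisymm h1 h2

private lemma pax_val_of_shell {y : ℚ_[ℓ]} {u : ℤ} (h : ‖y‖ = (ℓ:ℝ)^(-u)) :
    y.valuation = u := by
  have hq := pax_hq1 (ℓ := ℓ)
  have hy : y ≠ 0 := by
    intro h0; rw [h0, norm_zero] at h
    exact absurd h.symm (ne_of_gt (zpow_pos (by linarith) _))
  have h2 := Padic.norm_eq_zpow_neg_valuation hy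
  rw [h2] at h
  have := zpow_right_injective₀ (by linarith : (0:ℝ) < ℓ) (ne_of_gt hq) h
  omega

private lemma pax_shell_disj {a b : ℤ} (hab : a ≠ b) :
    Disjoint {y : ℚ_[ℓ] | ‖y‖ = (ℓ:ℝ)^(-a)} {y : ℚ_[ℓ] | ‖y‖ = (ℓ:ℝ)^(-b)} := by
  rw [Set.disjoint_left]
  intro y hy1 hy2
  simp only [Set.mem_setOf_eq] at hy1 hy2
  have h1 := pax_val_of_shell hy1
  have h2 := pax_val_of_shell hy2
  omega

private lemma pax_val_measurable [MeasurableSpace ℚ_[ℓ]] [BorelSpace ℚ_[ℓ]] :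
    Measurable (fun y : ℚ_[ℓ] => y.valuation) := by
  apply measurable_to_countable'
  intro v
  rcases eq_or_ne v 0 with rfl | hv
  · have : (fun y : ℚ_[ℓ] => y.valuation) ⁻¹' {0} =
        {y : ℚ_[ℓ] | ‖y‖ = (ℓ:ℝ)^(-(0:ℤ))} ∪ {(0:ℚ_[ℓ])} := by
      ext y
      simp only [Set.mem_preimage, Set.mem_singleton_iff, Set.mem_union, Set.mem_setOf_eq]
      constructor
      · intro h
        rcases eq_or_ne y 0 with rfl | hy
        · right; rfl
        · left; rw [Padic.norm_eq_zpow_neg_valuation hy, h]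
      · rintro (h | rfl)
        · exact pax_val_of_shell h
        · exact Padic.valuation_zero
    rw [this]
    exact (pax_shell_meas 0).union (measurableSet_singleton 0)
  · have : (fun y : ℚ_[ℓ] => y.valuation) ⁻¹' {v} = {y : ℚ_[ℓ] | ‖y‖ = (ℓ:ℝ)^(-v)} := by
      ext y
      simp only [Set.mem_preimage, Set.mem_singleton_iff, Set.mem_setOf_eq]
      constructor
      · intro h
        have hy : y ≠ 0 := by
          intro h0; rw [h0, Padic.valuation_zero] at h; exact hv h.symm
        rw [Padic.norm_eq_zpow_neg_valuation hy, h]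
      · exact pax_val_of_shell
    rw [this]
    exact pax_shell_meas v

private lemma pax_meas_step [MeasurableSpace ℚ_[ℓ]] [BorelSpace ℚ_[ℓ]]
    (μ : Measure ℚ_[ℓ]) [μ.IsAddHaarMeasure] (u : ℤ) :
    μ {y : ℚ_[ℓ] | ‖y‖ ≤ (ℓ:ℝ)^(-u)} = ℓ * μ {y : ℚ_[ℓ] | ‖y‖ ≤ (ℓ:ℝ)^(-(u+1))} := by
  have hq : 1 < (ℓ:ℝ) := pax_hq1
  have hq0 : (0:ℝ) < ℓ := by linarith
  have hℓQ : ((ℓ:ℚ_[ℓ])) ≠ 0 := by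
    exact_mod_cast (Nat.cast_ne_zero (R := ℚ_[ℓ])).mpr hℓ.out.ne_zero
  set a : ℕ → ℚ_[ℓ] := fun j => (j : ℚ_[ℓ]) * (ℓ:ℚ_[ℓ])^u with ha
  set T : ℕ → Set ℚ_[ℓ] := fun j => {y : ℚ_[ℓ] | ‖y - a j‖ ≤ (ℓ:ℝ)^(-(u+1))} with hT
  have hTmeas : ∀ j, MeasurableSet (T j) := by
    intro j
    have : T j = (fun y : ℚ_[ℓ] => y - a j) ⁻¹' (Metric.closedBall 0 ((ℓ:ℝ)^(-(u+1)))) := by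
      ext y; simp [hT, Metric.mem_closedBall, dist_eq_norm]
    rw [this]
    exact ((measurableSet_closedBall).preimage (by fun_prop))
  have hTμ : ∀ j, μ (T j) = μ {y : ℚ_[ℓ] | ‖y‖ ≤ (ℓ:ℝ)^(-(u+1))} := by
    intro j
    have : T j = (fun y : ℚ_[ℓ] => (-(a j)) + y) ⁻¹' {y : ℚ_[ℓ] | ‖y‖ ≤ (ℓ:ℝ)^(-(u+1))} := by
      ext y; simp [hT, Set.mem_setOf_eq, neg_add_eq_sub, ← sub_eq_neg_add]
    rw [this]
    exact measure_preimage_add μ _ _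
  have hnormp : ‖(ℓ:ℚ_[ℓ])^u‖ = (ℓ:ℝ)^(-u) := Padic.norm_p_zpow u
  have hcover : {y : ℚ_[ℓ] | ‖y‖ ≤ (ℓ:ℝ)^(-u)} = ⋃ j ∈ Finset.range ℓ, T j := by
    ext y
    simp only [Set.mem_setOf_eq, Set.mem_iUnion, Finset.mem_range, exists_prop]
    constructor
    · intro hy
      set z : ℚ_[ℓ] := y * (ℓ:ℚ_[ℓ])^(-u) with hz
      have hznorm : ‖z‖ ≤ 1 := by
        rw [hz, norm_mul, Padic.norm_p_zpow, neg_neg]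
        calc ‖y‖ * (ℓ:ℝ)^u ≤ (ℓ:ℝ)^(-u) * (ℓ:ℝ)^u := by
              apply mul_le_mul_of_nonneg_right hy (le_of_lt (zpow_pos hq0 _))
          _ = 1 := by rw [← zpow_add₀ (ne_of_gt hq0)]; simp
      set z' : ℤ_[ℓ] := ⟨z, hznorm⟩ with hz'
      refine ⟨z'.appr 1, by simpa using z'.appr_lt 1, ?_⟩
      have happr : ‖z' - (z'.appr 1 : ℤ_[ℓ])‖ ≤ (ℓ:ℝ)^(-1:ℤ) := by
        have := PadicInt.appr_spec 1 z'
        have h2 := (PadicInt.norm_le_pow_iff_mem_span_pow (z' - (z'.appr 1 : ℤ_[ℓ])) 1).mpr this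
        simpa using h2
      have hyz : y = z * (ℓ:ℚ_[ℓ])^u := by
        rw [hz, mul_assoc, ← zpow_add₀ hℓQ]; simp
      have hsub : y - a (z'.appr 1) = (z - (z'.appr 1 : ℚ_[ℓ])) * (ℓ:ℚ_[ℓ])^u := by
        rw [hyz, ha]; ring
      simp only [hT, Set.mem_setOf_eq, hsub, norm_mul, hnormp]
      have hzq : ‖z - ((z'.appr 1 : ℕ) : ℚ_[ℓ])‖ ≤ (ℓ:ℝ)^(-1:ℤ) := by
        have : ((z' - (z'.appr 1 : ℤ_[ℓ]) : ℤ_[ℓ]) : ℚ_[ℓ]) = z - ((z'.appr 1 : ℕ) : ℚ_[ℓ]) := by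
          push_cast [hz', PadicInt.coe_sub]; rfl
        rw [PadicInt.norm_def, this] at happr
        exact happr
      calc ‖z - ((z'.appr 1 : ℕ) : ℚ_[ℓ])‖ * (ℓ:ℝ)^(-u)
          ≤ (ℓ:ℝ)^(-1:ℤ) * (ℓ:ℝ)^(-u) := by
            apply mul_le_mul_of_nonneg_right hzq (le_of_lt (zpow_pos hq0 _))
        _ = (ℓ:ℝ)^(-(u+1)) := by rw [← zpow_add₀ (ne_of_gt hq0)]; ring_nf
    · rintro ⟨j, hj, hy⟩
      simp only [hT, Set.mem_setOf_eq] at hy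
      have haj : ‖a j‖ ≤ (ℓ:ℝ)^(-u) := by
        rw [ha]
        simp only [norm_mul, hnormp]
        calc ‖(j:ℚ_[ℓ])‖ * (ℓ:ℝ)^(-u) ≤ 1 * (ℓ:ℝ)^(-u) := by
              apply mul_le_mul_of_nonneg_right _ (le_of_lt (zpow_pos hq0 _))
              exact_mod_cast Padic.norm_int_le_one (j : ℤ)
          _ = (ℓ:ℝ)^(-u) := one_mul _
      have : y = (y - a j) + a j := by ring
      rw [this]
      calc ‖(y - a j) + a j‖ ≤ max ‖y - a j‖ ‖a j‖ := Padic.nonarchimedean _ _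
        _ ≤ (ℓ:ℝ)^(-u) := by
            apply max_le _ haj
            calc ‖y - a j‖ ≤ (ℓ:ℝ)^(-(u+1)) := hy
              _ ≤ (ℓ:ℝ)^(-u) := by
                  apply zpow_le_zpow_right₀ (le_of_lt hq) (by omega)
  have hdisj : (↑(Finset.range ℓ) : Set ℕ).PairwiseDisjoint T := by
    intro j hj k hk hjk
    simp only [Finset.coe_range, Set.mem_Iio] at hj hk
    rw [Function.onFun, Set.disjoint_left]
    intro y hyj hyk
    simp only [hT, Set.mem_setOf_eq] at hyj hyk
    have hd : ‖a j - a k‖ ≤ (ℓ:ℝ)^(-(u+1)) := by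
      have : a j - a k = (y - a k) + (-(y - a j)) := by ring
      rw [this]
      calc ‖(y - a k) + (-(y - a j))‖ ≤ max ‖y - a k‖ ‖-(y - a j)‖ :=
            Padic.nonarchimedean _ _
        _ ≤ (ℓ:ℝ)^(-(u+1)) := by rw [norm_neg]; exact max_le hyk hyj
    have hndvd : ¬ ((ℓ:ℤ) ∣ ((j:ℤ) - k)) := by
      intro hdvd
      have h1 : ((j:ℤ) - k) ≠ 0 := by omega
      have h2 := Int.le_of_dvd (abs_pos.mpr h1) ((dvd_abs _ _).mpr hdvd)
      have h3 : |(j:ℤ) - k| < ℓ := abs_sub_lt_iff.mpr ⟨by omega, by omega⟩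
      linarith
    have hnorm1 : ‖(((j:ℤ) - k : ℤ) : ℚ_[ℓ])‖ = 1 := by
      apply le_antisymm (Padic.norm_int_le_one _)
      by_contra hlt
      push_neg at hlt
      exact hndvd ((Padic.norm_intCast_lt_one_iff).mp hlt)
    have : ‖a j - a k‖ = (ℓ:ℝ)^(-u) := by
      have : a j - a k = (((j:ℤ) - k : ℤ) : ℚ_[ℓ]) * (ℓ:ℚ_[ℓ])^u := by
        rw [ha]; push_cast; ring
      rw [this, norm_mul, hnorm1, hnormp, one_mul]
    rw [this] at hd
    have : (ℓ:ℝ)^(-(u+1)) < (ℓ:ℝ)^(-u) := by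
      apply zpow_lt_zpow_right₀ hq (by omega)
    linarith
  rw [hcover, measure_biUnion_finset hdisj (fun j _ => hTmeas j)]
  simp only [hTμ, Finset.sum_const, Finset.card_range, nsmul_eq_mul]

private lemma pax_enn : (ℓ:ENNReal) ≠ 0 ∧ (ℓ:ENNReal) ≠ ⊤ :=
  ⟨by exact_mod_cast hℓ.out.ne_zero, ENNReal.natCast_ne_top ℓ⟩

private lemma pax_key (u : ℤ) :
    (ℓ:ENNReal) * ENNReal.ofReal ((ℓ:ℝ)^(-(u+1))) = ENNReal.ofReal ((ℓ:ℝ)^(-u)) := by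
  have hq0 : (0:ℝ) < ℓ := by exact_mod_cast hℓ.out.pos
  rw [← ENNReal.ofReal_natCast, ← ENNReal.ofReal_mul (by positivity)]
  congr 1
  rw [show -u = 1 + (-(u+1)) by ring, zpow_add₀ (ne_of_gt hq0), zpow_one]

private lemma pax_meas_ball [MeasurableSpace ℚ_[ℓ]] [BorelSpace ℚ_[ℓ]]
    (μ : Measure ℚ_[ℓ]) [μ.IsAddHaarMeasure]
    (hμ : μ {y : ℚ_[ℓ] | ‖y‖ ≤ 1} = 1) (u : ℤ) :
    μ {y : ℚ_[ℓ] | ‖y‖ ≤ (ℓ:ℝ)^(-u)} = ENNReal.ofReal ((ℓ:ℝ)^(-u)) := by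
  obtain ⟨hn0, hnt⟩ := pax_enn (ℓ := ℓ)
  have base : μ {y : ℚ_[ℓ] | ‖y‖ ≤ (ℓ:ℝ)^(-(0:ℤ))} = ENNReal.ofReal ((ℓ:ℝ)^(-(0:ℤ))) := by
    simpa using hμ
  have fwd : ∀ v : ℤ, μ {y : ℚ_[ℓ] | ‖y‖ ≤ (ℓ:ℝ)^(-v)} = ENNReal.ofReal ((ℓ:ℝ)^(-v)) →
      μ {y : ℚ_[ℓ] | ‖y‖ ≤ (ℓ:ℝ)^(-(v+1))} = ENNReal.ofReal ((ℓ:ℝ)^(-(v+1))) := by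
    intro v hv
    have h1 := pax_meas_step μ v
    rw [hv, ← pax_key v] at h1
    exact (ENNReal.mul_right_inj hn0 hnt).mp h1.symm
  have bwd : ∀ v : ℤ, μ {y : ℚ_[ℓ] | ‖y‖ ≤ (ℓ:ℝ)^(-v)} = ENNReal.ofReal ((ℓ:ℝ)^(-v)) →
      μ {y : ℚ_[ℓ] | ‖y‖ ≤ (ℓ:ℝ)^(-(v-1))} = ENNReal.ofReal ((ℓ:ℝ)^(-(v-1))) := by
    intro v hv
    have h1 := pax_meas_step μ (v-1)
    rw [show v - 1 + 1 = v by ring] at h1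
    have h2 := pax_key (ℓ := ℓ) (v-1)
    rw [show v - 1 + 1 = v by ring] at h2
    rw [h1, hv, h2]
  induction u using Int.induction_on with
  | zero => exact base
  | succ n ih => exact fwd n ih
  | pred n ih => exact bwd (-n) ih

private lemma pax_zero_meas [MeasurableSpace ℚ_[ℓ]] [BorelSpace ℚ_[ℓ]]
    (μ : Measure ℚ_[ℓ]) [μ.IsAddHaarMeasure]
    (hμ : μ {y : ℚ_[ℓ] | ‖y‖ ≤ 1} = 1) : μ {(0:ℚ_[ℓ])} = 0 := by
  have hq : 1 < (ℓ:ℝ) := pax_hq1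
  have hle : ∀ n : ℕ, μ {(0:ℚ_[ℓ])} ≤ ENNReal.ofReal ((ℓ:ℝ)^(-(n:ℤ))) := by
    intro n
    rw [← pax_meas_ball μ hμ n]
    apply measure_mono
    intro y hy
    simp only [Set.mem_singleton_iff] at hy
    simp [hy, le_of_lt (zpow_pos (by linarith : (0:ℝ) < ℓ) _)]
  have htend : Filter.Tendsto (fun n : ℕ => ENNReal.ofReal ((ℓ:ℝ)^(-(n:ℤ))))
      Filter.atTop (nhds 0) := by
    have h1 : Filter.Tendsto (fun n : ℕ => ((ℓ:ℝ)⁻¹)^n) Filter.atTop (nhds 0) :=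
      tendsto_pow_atTop_nhds_zero_of_lt_one (by positivity) (by
        rw [inv_lt_one_iff₀]; right; exact hq)
    have h2 : (fun n : ℕ => ENNReal.ofReal ((ℓ:ℝ)^(-(n:ℤ)))) =
        (fun x : ℝ => ENNReal.ofReal x) ∘ (fun n : ℕ => ((ℓ:ℝ)⁻¹)^n) := by
      funext n
      simp only [Function.comp_apply]
      congr 1
      rw [zpow_neg, zpow_natCast, inv_pow]
    rw [h2, show (0 : ENNReal) = ENNReal.ofReal 0 by simp]
    exact (ENNReal.continuous_ofReal.tendsto 0).comp h1
  have := ge_of_tendsto' htend hle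
  exact le_antisymm this zero_le

end AuxPadic

section AuxPsi
variable {ℓ : ℕ} [hℓ : Fact ℓ.Prime] {ψ : ℚ_[ℓ] → ℂ}

private lemma pax_psi_cont (hψ_add : ∀ x y : ℚ_[ℓ], ψ (x + y) = ψ x * ψ y)
    (hψ_triv : ∀ x : ℚ_[ℓ], ‖x‖ ≤ 1 → ψ x = 1) : Continuous ψ := by
  rw [continuous_iff_continuousAt]
  intro x
  have hev : ψ =ᶠ[nhds x] fun _ => ψ x := by
    filter_upwards [Metric.closedBall_mem_nhds x one_pos] with y hy
    have h1 : ψ y = ψ x * ψ (y - x) := by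
      rw [← hψ_add]; congr 1; ring
    rw [h1, hψ_triv (y - x) (by simpa [dist_eq_norm] using hy), mul_one]
  exact (continuousAt_const (y := ψ x)).congr hev.symm

private lemma pax_psi_pow (hψ_add : ∀ x y : ℚ_[ℓ], ψ (x + y) = ψ x * ψ y)
    (hψ_triv : ∀ x : ℚ_[ℓ], ‖x‖ ≤ 1 → ψ x = 1) (x : ℚ_[ℓ]) (n : ℕ) :
    ψ ((n : ℚ_[ℓ]) * x) = ψ x ^ n := by
  induction n with
  | zero => simpa using hψ_triv 0 (by simp)
  | succ k ih =>
      have : ((k+1 : ℕ) : ℚ_[ℓ]) * x = (k:ℚ_[ℓ]) * x + x := by push_cast; ring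
      rw [this, hψ_add, ih, pow_succ]

private lemma pax_psi_norm (hψ_add : ∀ x y : ℚ_[ℓ], ψ (x + y) = ψ x * ψ y)
    (hψ_triv : ∀ x : ℚ_[ℓ], ‖x‖ ≤ 1 → ψ x = 1) (x : ℚ_[ℓ]) : ‖ψ x‖ = 1 := by
  have hq : 1 < (ℓ:ℝ) := by exact_mod_cast hℓ.out.one_lt
  rcases eq_or_ne x 0 with rfl | hx
  · rw [hψ_triv 0 (by simp)]; simp
  · set n : ℕ := x.valuation.natAbs with hn
    have hle : ‖((ℓ^n : ℕ) : ℚ_[ℓ]) * x‖ ≤ 1 := by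
      rw [norm_mul, Padic.norm_eq_zpow_neg_valuation hx]
      push_cast
      rw [← zpow_natCast (ℓ:ℚ_[ℓ]) n, Padic.norm_p_zpow,
        ← zpow_add₀ (by linarith : (ℓ:ℝ) ≠ 0)]
      rw [← zpow_zero (ℓ:ℝ)]
      apply zpow_le_zpow_right₀ (le_of_lt hq)
      have : -(x.valuation) ≤ (n:ℤ) := by rw [hn]; omega
      omega
    have h1 : ψ x ^ (ℓ^n) = 1 := by
      rw [← pax_psi_pow hψ_add hψ_triv x (ℓ^n)]
      exact hψ_triv _ hle
    have h2 : ‖ψ x‖ ^ (ℓ^n) = 1 := by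
      rw [← norm_pow, h1, norm_one]
    have hk : ℓ^n ≠ 0 := pow_ne_zero _ hℓ.out.ne_zero
    by_contra hne
    rcases lt_or_gt_of_ne hne with hlt | hgt
    · have := pow_lt_one₀ (norm_nonneg _) hlt hk
      rw [h2] at this; exact lt_irrefl _ this
    · have := one_lt_pow₀ hgt hk
      rw [h2] at this; exact lt_irrefl _ this

private lemma pax_ball_int_zero [MeasurableSpace ℚ_[ℓ]] [BorelSpace ℚ_[ℓ]]
    (μ : Measure ℚ_[ℓ]) [μ.IsAddHaarMeasure]
    (hψ_add : ∀ x y : ℚ_[ℓ], ψ (x + y) = ψ x * ψ y)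
    (hψ_triv : ∀ x : ℚ_[ℓ], ‖x‖ ≤ 1 → ψ x = 1)
    (hψ_nontriv : ∃ x : ℚ_[ℓ], ‖x‖ = (ℓ : ℝ) ∧ ψ x ≠ 1)
    (u : ℤ) (η : ℚ_[ℓ]) (h : (ℓ:ℝ)^u < ‖η‖) :
    ∫ y in {y : ℚ_[ℓ] | ‖y‖ ≤ (ℓ:ℝ)^(-u)}, ψ (-(y * η)) ∂μ = 0 := by
  have hq : 1 < (ℓ:ℝ) := by exact_mod_cast hℓ.out.one_lt
  have hq0 : (0:ℝ) < ℓ := by linarith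
  have hη : η ≠ 0 := by
    intro h0; rw [h0, norm_zero] at h
    exact absurd h (not_lt.mpr (le_of_lt (zpow_pos hq0 _)))
  obtain ⟨x, hx, hx1⟩ := hψ_nontriv
  set y₀ : ℚ_[ℓ] := -(x / η) with hy₀
  have hy₀η : -(y₀ * η) = x := by
    rw [hy₀]; field_simp
  have hy₀mem : ‖y₀‖ ≤ (ℓ:ℝ)^(-u) := by
    have hηnorm : ‖η‖ = (ℓ:ℝ)^(-η.valuation) := Padic.norm_eq_zpow_neg_valuation hη
    have hu : u < -η.valuation := by
      rw [hηnorm] at h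
      exact (zpow_lt_zpow_iff_right₀ hq).mp h
    rw [hy₀, norm_neg, norm_div, hx, hηnorm]
    have heq : (ℓ:ℝ) / (ℓ:ℝ)^(-η.valuation) = (ℓ:ℝ)^(1 + η.valuation) := by
      rw [zpow_add₀ (ne_of_gt hq0), zpow_one, zpow_neg]; field_simp
    rw [heq]
    apply zpow_le_zpow_right₀ (le_of_lt hq)
    omega
  set B := {y : ℚ_[ℓ] | ‖y‖ ≤ (ℓ:ℝ)^(-u)} with hB
  have hBmeas : MeasurableSet B := by
    have : B = (fun y : ℚ_[ℓ] => ‖y‖) ⁻¹' (Set.Iic ((ℓ:ℝ)^(-u))) := rfl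
    rw [this]; exact continuous_norm.measurable measurableSet_Iic
  have hpre : (fun y : ℚ_[ℓ] => y₀ + y) ⁻¹' B = B := by
    ext y
    simp only [Set.mem_preimage, hB, Set.mem_setOf_eq]
    constructor
    · intro hy
      have : y = (y₀ + y) + (-y₀) := by ring
      rw [this]
      refine le_trans (Padic.nonarchimedean _ _) (max_le hy ?_)
      rwa [norm_neg]
    · intro hy
      refine le_trans (Padic.nonarchimedean _ _) (max_le hy₀mem hy)
  have hmap : (μ.restrict B).map (fun y : ℚ_[ℓ] => y₀ + y) = μ.restrict B := by
    have h1 := Measure.restrict_map (μ := μ) (measurable_const_add y₀) hBmeas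
    rw [hpre] at h1
    rw [← h1, MeasureTheory.map_add_left_eq_self μ y₀]
  set χ : ℚ_[ℓ] → ℂ := fun y => ψ (-(y * η)) with hχ
  have hχcont : Continuous χ := by
    apply (pax_psi_cont hψ_add hψ_triv).comp
    fun_prop
  have key : ∫ y in B, χ y ∂μ = ψ x * ∫ y in B, χ y ∂μ := by
    conv_lhs => rw [← hmap]
    rw [integral_map (measurable_const_add y₀).aemeasurable
      (hχcont.aestronglyMeasurable)]
    have : ∀ y : ℚ_[ℓ], χ (y₀ + y) = ψ x * χ y := by
      intro y
      have : -((y₀ + y) * η) = x + -(y * η) := by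
        rw [← hy₀η]; ring
      rw [hχ]; simp only
      rw [this, hψ_add]
    simp_rw [this]
    rw [integral_const_mul]
  have hsub : (1 - ψ x) * ∫ y in B, χ y ∂μ = 0 := by
    rw [sub_mul, one_mul, ← key, sub_self]
  rcases mul_eq_zero.mp hsub with h1 | h2
  · exact absurd (sub_eq_zero.mp h1).symm hx1
  · exact h2

private lemma pax_amp_norm (s : ℂ) (v : ℤ) :
    ‖(((ℓ:ℝ)^(-(2 * Int.fdiv v 2)) : ℝ) : ℂ) ^ s‖ =
      ((ℓ:ℝ)^(-(2 * Int.fdiv v 2)) : ℝ) ^ s.re := by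
  have hq0 : (0:ℝ) < ℓ := by exact_mod_cast hℓ.out.pos
  exact Complex.norm_cpow_eq_rpow_re_of_pos (zpow_pos hq0 _) s

private lemma pax_amp_bound (σ : ℝ) (u : ℤ) :
    ((ℓ:ℝ)^(-(2 * Int.fdiv u 2)) : ℝ) ^ σ ≤ (ℓ:ℝ)^|σ| * (ℓ:ℝ)^(-(u:ℝ)*σ) := by
  have hq : 1 < (ℓ:ℝ) := pax_hq1
  have hq0 : (0:ℝ) < ℓ := by linarith
  have h1 : ((ℓ:ℝ)^(-(2 * Int.fdiv u 2) : ℤ) : ℝ) = (ℓ:ℝ) ^ ((-(2 * Int.fdiv u 2) : ℤ) : ℝ) :=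
    (Real.rpow_intCast _ _).symm
  rw [h1, ← Real.rpow_mul (le_of_lt hq0), ← Real.rpow_add hq0]
  rw [Real.rpow_le_rpow_left_iff hq]
  have hd : Int.fdiv u 2 = u / 2 := Int.fdiv_eq_ediv_of_nonneg u (by norm_num)
  have hd1 : 0 ≤ u - 2 * Int.fdiv u 2 := by omega
  have hd2 : u - 2 * Int.fdiv u 2 ≤ 1 := by omega
  have hc1 : (0:ℝ) ≤ (u:ℝ) - 2 * ((Int.fdiv u 2 : ℤ) : ℝ) := by exact_mod_cast hd1
  have hc2 : (u:ℝ) - 2 * ((Int.fdiv u 2 : ℤ) : ℝ) ≤ 1 := by exact_mod_cast hd2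
  push_cast
  rcases le_or_gt 0 σ with hσ | hσ
  · rw [abs_of_nonneg hσ]; nlinarith
  · rw [abs_of_neg hσ]; nlinarith

end AuxPsi

section AuxInt
variable {ℓ : ℕ} [hℓ : Fact ℓ.Prime] [MeasurableSpace ℚ_[ℓ]] [BorelSpace ℚ_[ℓ]]
  {μ : Measure ℚ_[ℓ]} [μ.IsAddHaarMeasure] {ψ : ℚ_[ℓ] → ℂ} {s : ℂ} {η : ℚ_[ℓ]}

private lemma pax_shell_lint (hμ : μ {y : ℚ_[ℓ] | ‖y‖ ≤ 1} = 1)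
    (hψn : ∀ x, ‖ψ x‖ = 1) (u : ℤ) :
    ∫⁻ y in {y : ℚ_[ℓ] | ‖y‖ = (ℓ:ℝ)^(-u)},
        ENNReal.ofReal ‖(((ℓ:ℝ)^(-(2 * Int.fdiv y.valuation 2)) : ℝ) : ℂ) ^ s * ψ (-(y*η))‖ ∂μ
      ≤ ENNReal.ofReal ((ℓ:ℝ)^|s.re| * (ℓ:ℝ)^(-(u:ℝ)*(s.re+1))) := by
  have hq : 1 < (ℓ:ℝ) := pax_hq1
  have hq0 : (0:ℝ) < ℓ := by linarith
  set A : ℝ := ((ℓ:ℝ)^(-(2 * Int.fdiv u 2)) : ℝ) ^ s.re with hA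
  have hA0 : 0 ≤ A := Real.rpow_nonneg (le_of_lt (zpow_pos hq0 _)) _
  have hcongr : ∫⁻ y in {y : ℚ_[ℓ] | ‖y‖ = (ℓ:ℝ)^(-u)},
      ENNReal.ofReal ‖(((ℓ:ℝ)^(-(2 * Int.fdiv y.valuation 2)) : ℝ) : ℂ) ^ s * ψ (-(y*η))‖ ∂μ
      = ∫⁻ _ in {y : ℚ_[ℓ] | ‖y‖ = (ℓ:ℝ)^(-u)}, ENNReal.ofReal A ∂μ := by
    apply setLIntegral_congr_fun (pax_shell_meas u)
    intro y hy
    dsimp only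
    rw [norm_mul, hψn, mul_one, pax_amp_norm s y.valuation,
      pax_val_of_shell (Set.mem_setOf_eq ▸ hy)]
  rw [hcongr, setLIntegral_const]
  have hμS : μ {y : ℚ_[ℓ] | ‖y‖ = (ℓ:ℝ)^(-u)} ≤ ENNReal.ofReal ((ℓ:ℝ)^(-u)) := by
    rw [← pax_meas_ball μ hμ u]
    apply measure_mono
    intro y hy
    simp only [Set.mem_setOf_eq] at hy ⊢
    exact le_of_eq hy
  calc ENNReal.ofReal A * μ {y : ℚ_[ℓ] | ‖y‖ = (ℓ:ℝ)^(-u)}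
      ≤ ENNReal.ofReal A * ENNReal.ofReal ((ℓ:ℝ)^(-u)) := mul_le_mul_right hμS _
    _ = ENNReal.ofReal (A * (ℓ:ℝ)^(-u)) := (ENNReal.ofReal_mul hA0).symm
    _ ≤ ENNReal.ofReal ((ℓ:ℝ)^|s.re| * (ℓ:ℝ)^(-(u:ℝ)*(s.re+1))) := by
        apply ENNReal.ofReal_le_ofReal
        have h2 : A ≤ (ℓ:ℝ)^|s.re| * (ℓ:ℝ)^(-(u:ℝ)*s.re) := pax_amp_bound s.re u
        have h3 : A * (ℓ:ℝ)^(-u) ≤ ((ℓ:ℝ)^|s.re| * (ℓ:ℝ)^(-(u:ℝ)*s.re)) * (ℓ:ℝ)^(-u) :=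
          mul_le_mul_of_nonneg_right h2 (le_of_lt (zpow_pos hq0 _))
        have h4 : ((ℓ:ℝ)^|s.re| * (ℓ:ℝ)^(-(u:ℝ)*s.re)) * (ℓ:ℝ)^(-u)
            = (ℓ:ℝ)^|s.re| * (ℓ:ℝ)^(-(u:ℝ)*(s.re+1)) := by
          rw [show ((ℓ:ℝ)^(-u:ℤ) : ℝ) = (ℓ:ℝ)^((-u:ℤ):ℝ) from (Real.rpow_intCast _ _).symm]
          rw [mul_assoc, ← Real.rpow_add hq0]
          congr 1
          push_cast; ring
        linarith

private lemma pax_ball_lint (hμ : μ {y : ℚ_[ℓ] | ‖y‖ ≤ 1} = 1)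
    (hψn : ∀ x, ‖ψ x‖ = 1) (hsre : -1 < s.re) (t : ℤ) :
    ∫⁻ y in {y : ℚ_[ℓ] | ‖y‖ ≤ (ℓ:ℝ)^(-t)},
        ENNReal.ofReal ‖(((ℓ:ℝ)^(-(2 * Int.fdiv y.valuation 2)) : ℝ) : ℂ) ^ s * ψ (-(y*η))‖ ∂μ
      ≤ ENNReal.ofReal (((ℓ:ℝ)^|s.re| * (1 - (ℓ:ℝ)^(-(s.re+1)))⁻¹) *
          (ℓ:ℝ)^(-(t:ℝ)*(s.re+1))) := by
  have hq : 1 < (ℓ:ℝ) := pax_hq1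
  have hq0 : (0:ℝ) < ℓ := by linarith
  set g := fun y : ℚ_[ℓ] =>
    ENNReal.ofReal ‖(((ℓ:ℝ)^(-(2 * Int.fdiv y.valuation 2)) : ℝ) : ℂ) ^ s * ψ (-(y*η))‖ with hg
  set r : ℝ := (ℓ:ℝ)^(-(s.re+1)) with hr
  have hr0 : 0 < r := Real.rpow_pos_of_pos hq0 _
  have hr1 : r < 1 := Real.rpow_lt_one_of_one_lt_of_neg hq (by linarith)
  have hsub : {y : ℚ_[ℓ] | ‖y‖ ≤ (ℓ:ℝ)^(-t)} ⊆
      {(0:ℚ_[ℓ])} ∪ ⋃ n : ℕ, {y : ℚ_[ℓ] | ‖y‖ = (ℓ:ℝ)^(-(t+(n:ℤ)))} := by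
    intro y hy
    simp only [Set.mem_setOf_eq] at hy
    rcases eq_or_ne y 0 with rfl | hy0
    · left; rfl
    · right
      have hval : ‖y‖ = (ℓ:ℝ)^(-y.valuation) := Padic.norm_eq_zpow_neg_valuation hy0
      have hvt : t ≤ y.valuation := by
        rw [hval] at hy
        have := (zpow_le_zpow_iff_right₀ hq).mp hy
        omega
      refine Set.mem_iUnion.mpr ⟨(y.valuation - t).toNat, ?_⟩
      simp only [Set.mem_setOf_eq]
      rw [hval]
      congr 1
      omega
  have hzero : ∫⁻ y in {(0:ℚ_[ℓ])}, g y ∂μ = 0 := by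
    rw [Measure.restrict_eq_zero.mpr (pax_zero_meas μ hμ), lintegral_zero_measure]
  have hpair : Pairwise (Function.onFun Disjoint
      (fun n : ℕ => {y : ℚ_[ℓ] | ‖y‖ = (ℓ:ℝ)^(-(t+(n:ℤ)))})) := by
    intro m n hmn
    exact pax_shell_disj (by omega)
  calc ∫⁻ y in {y : ℚ_[ℓ] | ‖y‖ ≤ (ℓ:ℝ)^(-t)}, g y ∂μ
      ≤ ∫⁻ y in {(0:ℚ_[ℓ])} ∪ ⋃ n : ℕ, {y : ℚ_[ℓ] | ‖y‖ = (ℓ:ℝ)^(-(t+(n:ℤ)))}, g y ∂μ :=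
        lintegral_mono_set hsub
    _ ≤ (∫⁻ y in {(0:ℚ_[ℓ])}, g y ∂μ) +
        ∫⁻ y in ⋃ n : ℕ, {y : ℚ_[ℓ] | ‖y‖ = (ℓ:ℝ)^(-(t+(n:ℤ)))}, g y ∂μ :=
        lintegral_union_le _ _ _
    _ = ∫⁻ y in ⋃ n : ℕ, {y : ℚ_[ℓ] | ‖y‖ = (ℓ:ℝ)^(-(t+(n:ℤ)))}, g y ∂μ := by
        rw [hzero, zero_add]
    _ = ∑' n : ℕ, ∫⁻ y in {y : ℚ_[ℓ] | ‖y‖ = (ℓ:ℝ)^(-(t+(n:ℤ)))}, g y ∂μ :=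
        lintegral_iUnion (fun n => pax_shell_meas _) hpair _
    _ ≤ ENNReal.ofReal (((ℓ:ℝ)^|s.re| * (1 - r)⁻¹) * (ℓ:ℝ)^(-(t:ℝ)*(s.re+1))) := by
        refine le_trans (ENNReal.tsum_le_tsum fun n => pax_shell_lint hμ hψn (t+(n:ℤ))) ?_
        simp only [Int.cast_add, Int.cast_natCast]
        have hstep : ∀ n : ℕ, (ℓ:ℝ)^|s.re| * (ℓ:ℝ)^(-((t:ℝ)+(n:ℝ))*(s.re+1))
            = ((ℓ:ℝ)^|s.re| * (ℓ:ℝ)^(-(t:ℝ)*(s.re+1))) * r^n := by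
          intro n
          rw [hr, ← Real.rpow_natCast ((ℓ:ℝ)^(-(s.re+1))) n, ← Real.rpow_mul (le_of_lt hq0)]
          simp only [← Real.rpow_add hq0]
          congr 1
          push_cast; ring
        have ha0 : 0 ≤ (ℓ:ℝ)^|s.re| * (ℓ:ℝ)^(-(t:ℝ)*(s.re+1)) := by positivity
        calc ∑' n : ℕ, ENNReal.ofReal ((ℓ:ℝ)^|s.re| * (ℓ:ℝ)^(-((t:ℝ)+(n:ℝ))*(s.re+1)))
            = ∑' n : ℕ, (ENNReal.ofReal ((ℓ:ℝ)^|s.re| * (ℓ:ℝ)^(-(t:ℝ)*(s.re+1))) *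
                (ENNReal.ofReal r)^n) := by
              congr 1; funext n
              rw [hstep n, ENNReal.ofReal_mul ha0, ENNReal.ofReal_pow (le_of_lt hr0)]
          _ = ENNReal.ofReal ((ℓ:ℝ)^|s.re| * (ℓ:ℝ)^(-(t:ℝ)*(s.re+1))) *
                (1 - ENNReal.ofReal r)⁻¹ := by
              rw [ENNReal.tsum_mul_left, ENNReal.tsum_geometric]
          _ = ENNReal.ofReal ((ℓ:ℝ)^|s.re| * (ℓ:ℝ)^(-(t:ℝ)*(s.re+1))) *
                ENNReal.ofReal ((1 - r)⁻¹) := by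
              congr 1
              rw [← ENNReal.ofReal_one, ← ENNReal.ofReal_sub _ (le_of_lt hr0),
                ENNReal.ofReal_inv_of_pos (by linarith)]
          _ ≤ ENNReal.ofReal (((ℓ:ℝ)^|s.re| * (1 - r)⁻¹) * (ℓ:ℝ)^(-(t:ℝ)*(s.re+1))) := by
              rw [← ENNReal.ofReal_mul ha0]
              apply ENNReal.ofReal_le_ofReal
              apply le_of_eq; ring

private lemma pax_f_meas (hψ_add : ∀ x y : ℚ_[ℓ], ψ (x + y) = ψ x * ψ y)
    (hψ_triv : ∀ x : ℚ_[ℓ], ‖x‖ ≤ 1 → ψ x = 1) :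
    Measurable (fun y : ℚ_[ℓ] =>
      (((ℓ:ℝ)^(-(2 * Int.fdiv y.valuation 2)) : ℝ) : ℂ) ^ s * ψ (-(y*η))) := by
  apply Measurable.mul
  · exact Measurable.comp
      (measurable_from_top (f := fun v : ℤ => (((ℓ:ℝ)^(-(2 * Int.fdiv v 2)) : ℝ) : ℂ) ^ s))
      pax_val_measurable
  · exact ((pax_psi_cont hψ_add hψ_triv).comp (by fun_prop)).measurable

private lemma pax_integrable (hμ : μ {y : ℚ_[ℓ] | ‖y‖ ≤ 1} = 1)
    (hψ_add : ∀ x y : ℚ_[ℓ], ψ (x + y) = ψ x * ψ y)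
    (hψ_triv : ∀ x : ℚ_[ℓ], ‖x‖ ≤ 1 → ψ x = 1) (hsre : -1 < s.re) (t : ℤ) :
    IntegrableOn (fun y : ℚ_[ℓ] =>
        (((ℓ:ℝ)^(-(2 * Int.fdiv y.valuation 2)) : ℝ) : ℂ) ^ s * ψ (-(y*η)))
      {y : ℚ_[ℓ] | ‖y‖ ≤ (ℓ:ℝ)^(-t)} μ := by
  constructor
  · exact (pax_f_meas hψ_add hψ_triv).aestronglyMeasurable
  · rw [hasFiniteIntegral_iff_norm]
    exact lt_of_le_of_lt
      (pax_ball_lint hμ (pax_psi_norm hψ_add hψ_triv) hsre t) ENNReal.ofReal_lt_top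

end AuxInt

section AuxMain
variable {ℓ : ℕ} [hℓ : Fact ℓ.Prime] [MeasurableSpace ℚ_[ℓ]] [BorelSpace ℚ_[ℓ]]
  {μ : Measure ℚ_[ℓ]} [μ.IsAddHaarMeasure] {ψ : ℚ_[ℓ] → ℂ} {s : ℂ}

private lemma pax_shell_zero
    (hψ_add : ∀ x y : ℚ_[ℓ], ψ (x + y) = ψ x * ψ y)
    (hψ_triv : ∀ x : ℚ_[ℓ], ‖x‖ ≤ 1 → ψ x = 1)
    (hψ_nontriv : ∃ x : ℚ_[ℓ], ‖x‖ = (ℓ : ℝ) ∧ ψ x ≠ 1)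
    (u : ℤ) (η : ℚ_[ℓ]) (h : (ℓ:ℝ)^(u+2) < ‖η‖) :
    ∫ y in {y : ℚ_[ℓ] | ‖y‖ = (ℓ:ℝ)^(-u)},
      (((ℓ:ℝ)^(-(2 * Int.fdiv y.valuation 2)) : ℝ) : ℂ) ^ s * ψ (-(y*η)) ∂μ = 0 := by
  have hq : 1 < (ℓ:ℝ) := pax_hq1
  have hq0 : (0:ℝ) < ℓ := by linarith
  have hχcont : Continuous fun y : ℚ_[ℓ] => ψ (-(y*η)) :=
    (pax_psi_cont hψ_add hψ_triv).comp (by fun_prop)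
  have hint : IntegrableOn (fun y : ℚ_[ℓ] => ψ (-(y*η)))
      {y : ℚ_[ℓ] | ‖y‖ ≤ (ℓ:ℝ)^(-u)} μ :=
    hχcont.continuousOn.integrableOn_compact (pax_ball_compact u)
  have hcongr : ∫ y in {y : ℚ_[ℓ] | ‖y‖ = (ℓ:ℝ)^(-u)},
        (((ℓ:ℝ)^(-(2 * Int.fdiv y.valuation 2)) : ℝ) : ℂ) ^ s * ψ (-(y*η)) ∂μ
      = ∫ y in {y : ℚ_[ℓ] | ‖y‖ = (ℓ:ℝ)^(-u)},
        (((ℓ:ℝ)^(-(2 * Int.fdiv u 2)) : ℝ) : ℂ) ^ s * ψ (-(y*η)) ∂μ := by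
    apply setIntegral_congr_fun (pax_shell_meas u)
    intro y hy
    simp only [pax_val_of_shell (Set.mem_setOf_eq ▸ hy)]
  rw [hcongr, integral_const_mul, pax_shell_eq,
    integral_diff (pax_ball_meas (u+1)) hint
      (fun y hy => le_trans hy (zpow_le_zpow_right₀ hq.le (by omega)))]
  have h1 : (ℓ:ℝ)^u < ‖η‖ := lt_trans (zpow_lt_zpow_right₀ hq (by omega)) h
  have h2 : (ℓ:ℝ)^(u+1) < ‖η‖ := lt_trans (zpow_lt_zpow_right₀ hq (by omega)) h
  rw [pax_ball_int_zero μ hψ_add hψ_triv hψ_nontriv u η h1,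
    pax_ball_int_zero μ hψ_add hψ_triv hψ_nontriv (u+1) η h2, sub_zero, mul_zero]

end AuxMain

open MeasureTheory

/-- Oscillatory `ℓ`-adic integrals of the modified norm `|y|'^s` against the standard
additive character: vanishing on shells of exact valuation `u` when `|η|_ℓ > ℓ^{u+2}`,
a shell bound `C ℓ^{-u(σ+1)}`, and the resulting decay `(1+|η|_ℓ)^{-σ-1}` for the
integral over `ℓ^c ℤ_ℓ`. -/
theorem padic_modified_norm_oscillatory_integral
    (ℓ : ℕ) [Fact ℓ.Prime] (hodd : ℓ ≠ 2)
    [MeasurableSpace ℚ_[ℓ]] [BorelSpace ℚ_[ℓ]]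
    (μ : Measure ℚ_[ℓ]) [μ.IsAddHaarMeasure]
    (hμ : μ {y : ℚ_[ℓ] | ‖y‖ ≤ 1} = 1)
    (ψ : ℚ_[ℓ] → ℂ)
    (hψ_add : ∀ x y : ℚ_[ℓ], ψ (x + y) = ψ x * ψ y)
    (hψ_triv : ∀ x : ℚ_[ℓ], ‖x‖ ≤ 1 → ψ x = 1)
    (hψ_nontriv : ∃ x : ℚ_[ℓ], ‖x‖ = (ℓ : ℝ) ∧ ψ x ≠ 1)
    (c : ℤ) (s : ℂ) (hs : -1 < s.re) :
    (∀ u : ℤ, c ≤ u → ∀ η : ℚ_[ℓ], (ℓ : ℝ) ^ (u + 2) < ‖η‖ →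
        ∫ y in {y : ℚ_[ℓ] | ‖y‖ = (ℓ : ℝ) ^ (-u)},
          (((ℓ : ℝ) ^ (-(2 * Int.fdiv y.valuation 2)) : ℝ) : ℂ) ^ s * ψ (-(y * η)) ∂μ
          = 0) ∧
    (∃ C : ℝ, ∀ u : ℤ, c ≤ u → ∀ η : ℚ_[ℓ],
        ‖∫ y in {y : ℚ_[ℓ] | ‖y‖ = (ℓ : ℝ) ^ (-u)},
            (((ℓ : ℝ) ^ (-(2 * Int.fdiv y.valuation 2)) : ℝ) : ℂ) ^ s * ψ (-(y * η)) ∂μ‖ ≤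
          C * (ℓ : ℝ) ^ (-(u : ℝ) * (s.re + 1))) ∧
    (∃ C : ℝ, ∀ η : ℚ_[ℓ],
        ‖∫ y in {y : ℚ_[ℓ] | ‖y‖ ≤ (ℓ : ℝ) ^ (-c)},
            (((ℓ : ℝ) ^ (-(2 * Int.fdiv y.valuation 2)) : ℝ) : ℂ) ^ s * ψ (-(y * η)) ∂μ‖ ≤
          C * (1 + ‖η‖) ^ (-s.re - 1)) := by
  have hq : 1 < (ℓ:ℝ) := pax_hq1
  have hq0 : (0:ℝ) < ℓ := by linarith
  have hψn := pax_psi_norm hψ_add hψ_triv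
  have hr0 : (0:ℝ) < (ℓ:ℝ)^(-(s.re+1)) := Real.rpow_pos_of_pos hq0 _
  have hr1 : (ℓ:ℝ)^(-(s.re+1)) < 1 := Real.rpow_lt_one_of_one_lt_of_neg hq (by linarith)
  have hK₁0 : 0 ≤ (ℓ:ℝ)^|s.re| * (1 - (ℓ:ℝ)^(-(s.re+1)))⁻¹ :=
    mul_nonneg (Real.rpow_nonneg hq0.le _) (inv_nonneg.mpr (by linarith))
  have hK₂0 : (0:ℝ) < (ℓ:ℝ)^(-c) + (ℓ:ℝ)^(2:ℤ) := by positivity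
  refine ⟨fun u _ η hη => pax_shell_zero hψ_add hψ_triv hψ_nontriv u η hη,
    ⟨(ℓ:ℝ)^|s.re|, fun u _ η => ?_⟩, ?_⟩
  · refine le_trans (norm_integral_le_lintegral_norm _) ?_
    have h1 := pax_shell_lint (μ:=μ) (ψ:=ψ) (s:=s) (η:=η) hμ hψn u
    have h2 := ENNReal.toReal_mono ENNReal.ofReal_ne_top h1
    rwa [ENNReal.toReal_ofReal (by positivity)] at h2
  · refine ⟨((ℓ:ℝ)^|s.re| * (1 - (ℓ:ℝ)^(-(s.re+1)))⁻¹) *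
      ((ℓ:ℝ)^(-c) + (ℓ:ℝ)^(2:ℤ))^(s.re+1), fun η => ?_⟩
    classical
    set t : ℤ := if η = 0 then c else max c (-η.valuation - 2) with htdef
    have hct : c ≤ t := by
      rw [htdef]; split_ifs
      · exact le_refl c
      · exact le_max_left _ _
    have hBtsub : {y : ℚ_[ℓ] | ‖y‖ ≤ (ℓ:ℝ)^(-t)} ⊆ {y : ℚ_[ℓ] | ‖y‖ ≤ (ℓ:ℝ)^(-c)} :=
      fun y hy => le_trans hy (zpow_le_zpow_right₀ hq.le (by omega))
    have hBc := pax_integrable (μ:=μ) (ψ:=ψ) (s:=s) (η:=η) hμ hψ_add hψ_triv hs c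
    have hdiffeq : {y : ℚ_[ℓ] | ‖y‖ ≤ (ℓ:ℝ)^(-c)} \ {y : ℚ_[ℓ] | ‖y‖ ≤ (ℓ:ℝ)^(-t)}
        = ⋃ u ∈ Finset.Ico c t, {y : ℚ_[ℓ] | ‖y‖ = (ℓ:ℝ)^(-u)} := by
      ext y
      simp only [Set.mem_diff, Set.mem_setOf_eq, Set.mem_iUnion, Finset.mem_Ico, exists_prop]
      constructor
      · rintro ⟨h1, h2⟩
        push_neg at h2
        have hy0 : y ≠ 0 := by
          intro h0; rw [h0, norm_zero] at h2
          exact absurd h2 (not_lt.mpr (zpow_pos hq0 _).le)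
        have hval := Padic.norm_eq_zpow_neg_valuation hy0
        refine ⟨y.valuation, ⟨?_, ?_⟩, hval⟩
        · rw [hval] at h1
          have := (zpow_le_zpow_iff_right₀ hq).mp h1
          omega
        · rw [hval] at h2
          have := (zpow_lt_zpow_iff_right₀ hq).mp h2
          omega
      · rintro ⟨u, ⟨hcu, hut⟩, hy⟩
        refine ⟨by rw [hy]; exact zpow_le_zpow_right₀ hq.le (by omega), ?_⟩
        rw [hy]
        exact not_le.mpr (zpow_lt_zpow_right₀ hq (by omega))
    have h0 : ∫ y in {y : ℚ_[ℓ] | ‖y‖ ≤ (ℓ:ℝ)^(-c)} \ {y : ℚ_[ℓ] | ‖y‖ ≤ (ℓ:ℝ)^(-t)},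
        (((ℓ:ℝ)^(-(2 * Int.fdiv y.valuation 2)) : ℝ) : ℂ) ^ s * ψ (-(y*η)) ∂μ = 0 := by
      rw [hdiffeq, integral_biUnion_finset (Finset.Ico c t)
        (fun u _ => pax_shell_meas u)
        (fun a _ b _ hab => pax_shell_disj hab)
        (fun u hu => hBc.mono_set (fun y hy => by
          rw [Finset.mem_Ico] at hu
          exact le_trans (le_of_eq hy) (zpow_le_zpow_right₀ hq.le (by omega))))]
      apply Finset.sum_eq_zero
      intro u hu
      rw [Finset.mem_Ico] at hu
      have hη0 : η ≠ 0 := by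
        intro h0
        rw [htdef, if_pos h0] at hu
        omega
      apply pax_shell_zero hψ_add hψ_triv hψ_nontriv
      rw [Padic.norm_eq_zpow_neg_valuation hη0]
      apply zpow_lt_zpow_right₀ hq
      have htt : t = max c (-η.valuation - 2) := by rw [htdef, if_neg hη0]
      rcases max_cases c (-η.valuation - 2) with ⟨heq, hle⟩ | ⟨heq, hle⟩ <;> omega
    have hsplit : ∫ y in {y : ℚ_[ℓ] | ‖y‖ ≤ (ℓ:ℝ)^(-c)},
          (((ℓ:ℝ)^(-(2 * Int.fdiv y.valuation 2)) : ℝ) : ℂ) ^ s * ψ (-(y*η)) ∂μ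
        = ∫ y in {y : ℚ_[ℓ] | ‖y‖ ≤ (ℓ:ℝ)^(-t)},
          (((ℓ:ℝ)^(-(2 * Int.fdiv y.valuation 2)) : ℝ) : ℂ) ^ s * ψ (-(y*η)) ∂μ := by
      have hdiff := integral_diff (μ:=μ) (pax_ball_meas t) hBc hBtsub
      rw [h0] at hdiff
      exact sub_eq_zero.mp hdiff.symm
    rw [hsplit]
    have hlb := pax_ball_lint (μ:=μ) (ψ:=ψ) (s:=s) (η:=η) hμ hψn hs t
    have h2 := ENNReal.toReal_mono ENNReal.ofReal_ne_top hlb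
    rw [ENNReal.toReal_ofReal (mul_nonneg hK₁0 (Real.rpow_nonneg hq0.le _))] at h2
    have hnorm := le_trans (norm_integral_le_lintegral_norm _) h2
    have hη1 : (0:ℝ) < 1 + ‖η‖ := by positivity
    have hkey : (ℓ:ℝ)^(-t) * (1+‖η‖) ≤ (ℓ:ℝ)^(-c) + (ℓ:ℝ)^(2:ℤ) := by
      rcases eq_or_ne η 0 with rfl | hη0
      · rw [norm_zero, add_zero, mul_one]
        have h3 : (ℓ:ℝ)^(-t) ≤ (ℓ:ℝ)^(-c) := zpow_le_zpow_right₀ hq.le (by omega)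
        linarith [(zpow_pos hq0 (2:ℤ))]
      · have htt : t = max c (-η.valuation - 2) := by rw [htdef, if_neg hη0]
        have ht1 : (ℓ:ℝ)^(-t) ≤ (ℓ:ℝ)^(-c) := zpow_le_zpow_right₀ hq.le (by omega)
        have ht2 : (ℓ:ℝ)^(-t) * ‖η‖ ≤ (ℓ:ℝ)^(2:ℤ) := by
          rw [Padic.norm_eq_zpow_neg_valuation hη0, ← zpow_add₀ (ne_of_gt hq0)]
          apply zpow_le_zpow_right₀ hq.le
          have := le_max_right c (-η.valuation - 2)
          omega
        calc (ℓ:ℝ)^(-t) * (1+‖η‖) = (ℓ:ℝ)^(-t) + (ℓ:ℝ)^(-t) * ‖η‖ := by ring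
          _ ≤ (ℓ:ℝ)^(-c) + (ℓ:ℝ)^(2:ℤ) := add_le_add ht1 ht2
    have hle2 : ((ℓ:ℝ)^(-t) : ℝ) ≤ ((ℓ:ℝ)^(-c) + (ℓ:ℝ)^(2:ℤ)) * (1+‖η‖)⁻¹ := by
      rw [← div_eq_mul_inv, le_div_iff₀ hη1]
      exact hkey
    have hconv : (ℓ:ℝ)^(-(t:ℝ)*(s.re+1)) = (((ℓ:ℝ)^(-t:ℤ) : ℝ))^(s.re+1) := by
      rw [show ((ℓ:ℝ)^(-t:ℤ) : ℝ) = (ℓ:ℝ)^(((-t:ℤ)):ℝ) from (Real.rpow_intCast _ _).symm,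
        ← Real.rpow_mul hq0.le]
      congr 1; push_cast; ring
    have hq2 : (ℓ:ℝ)^(-(t:ℝ)*(s.re+1)) ≤
        ((ℓ:ℝ)^(-c) + (ℓ:ℝ)^(2:ℤ))^(s.re+1) * (1+‖η‖)^(-s.re-1) := by
      rw [hconv]
      calc (((ℓ:ℝ)^(-t:ℤ) : ℝ))^(s.re+1)
          ≤ (((ℓ:ℝ)^(-c) + (ℓ:ℝ)^(2:ℤ)) * (1+‖η‖)⁻¹)^(s.re+1) :=
            Real.rpow_le_rpow (zpow_pos hq0 _).le hle2 (by linarith)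
        _ = ((ℓ:ℝ)^(-c) + (ℓ:ℝ)^(2:ℤ))^(s.re+1) * (1+‖η‖)^(-s.re-1) := by
            rw [Real.mul_rpow hK₂0.le (inv_nonneg.mpr hη1.le),
              Real.inv_rpow hη1.le, ← Real.rpow_neg hη1.le]
            congr 1; ring
    calc ‖∫ y in {y : ℚ_[ℓ] | ‖y‖ ≤ (ℓ:ℝ)^(-t)},
          (((ℓ:ℝ)^(-(2 * Int.fdiv y.valuation 2)) : ℝ) : ℂ) ^ s * ψ (-(y*η)) ∂μ‖
        ≤ ((ℓ:ℝ)^|s.re| * (1 - (ℓ:ℝ)^(-(s.re+1)))⁻¹) * (ℓ:ℝ)^(-(t:ℝ)*(s.re+1)) := hnorm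
      _ ≤ ((ℓ:ℝ)^|s.re| * (1 - (ℓ:ℝ)^(-(s.re+1)))⁻¹) *
            (((ℓ:ℝ)^(-c) + (ℓ:ℝ)^(2:ℤ))^(s.re+1) * (1+‖η‖)^(-s.re-1)) :=
          mul_le_mul_of_nonneg_left hq2 hK₁0
      _ = ((ℓ:ℝ)^|s.re| * (1 - (ℓ:ℝ)^(-(s.re+1)))⁻¹) *
            ((ℓ:ℝ)^(-c) + (ℓ:ℝ)^(2:ℤ))^(s.re+1) * (1+‖η‖)^(-s.re-1) := by ring
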